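/- Let R₁ > 0 and C > 0, and let v : [R₁,∞) → ℝ² satisfy |v(r)| ≤ C·r^{−2} for all r ≥ R₁ and |v(r′) − v(r)| ≤ C·r^{−4}·|v(r)| for all r, r′ with R₁ ≤ r ≤ r′ ≤ 2r (here |·| denotes the Euclidean norm on ℝ²). Then there exists R ≥ R₁ such that v(r) = (0,0) for all r ≥ R. -/

import Mathlib

open Set

/-- Linearized compact-support argument: a vector-valued function with decay r^{-2}
and contractive dyadic difference estimate must vanish for large r. -/
theorem linearized_compact_support (R₁ C : ℝ) (hR₁ : 0 < R₁) (hC : 0 < C)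
    (v : ℝ → EuclideanSpace ℝ (Fin 2))
    (hdec : ∀ r ≥ R₁, ‖v r‖ ≤ C / r ^ 2)
    (hdiff : ∀ r r' : ℝ, R₁ ≤ r → r ≤ r' → r' ≤ 2 * r →
      ‖v r' - v r‖ ≤ C / r ^ 4 * ‖v r‖) :
    ∃ R ≥ R₁, ∀ r ≥ R, v r = 0 := by
  set R : ℝ := max R₁ (4 * C + 1) with hRdef
  have hRR₁ : R₁ ≤ R := le_max_left _ _
  have hR1 : (1 : ℝ) ≤ R := le_trans (by linarith) (le_max_right _ _)
  have hR4C : 4 * C + 1 ≤ R := le_max_right _ _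
  refine ⟨R, hRR₁, fun r hr => ?_⟩
  have hr1 : (1 : ℝ) ≤ r := le_trans hR1 hr
  have hr0 : (0 : ℝ) < r := by linarith
  have hrR₁ : R₁ ≤ r := le_trans hRR₁ hr
  -- dyadic lower bound
  have claim : ∀ n : ℕ, (3 / 4 : ℝ) ^ n * ‖v r‖ ≤ ‖v (2 ^ n * r)‖ := by
    intro n
    induction n with
    | zero => simp
    | succ n ih =>
      set s : ℝ := 2 ^ n * r with hs
      have h2n : (1 : ℝ) ≤ 2 ^ n := one_le_pow₀ (by norm_num)
      have hrs : r ≤ s := le_mul_of_one_le_left hr0.le h2n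
      have hsR₁ : R₁ ≤ s := le_trans hrR₁ hrs
      have hs1 : (1 : ℝ) ≤ s := le_trans hr1 hrs
      have hs0 : (0 : ℝ) < s := by linarith
      have hd := hdiff s (2 * s) hsR₁ (by linarith) le_rfl
      -- C / s^4 ≤ 1/4
      have hsR : R ≤ s := le_trans hr hrs
      have hs4 : s ≤ s ^ 4 := le_self_pow₀ hs1 (by norm_num)
      have hCs : C / s ^ 4 ≤ 1 / 4 := by
        rw [div_le_div_iff₀ (by positivity) (by norm_num)]
        nlinarith
      have hmul : C / s ^ 4 * ‖v s‖ ≤ 1 / 4 * ‖v s‖ :=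
        mul_le_mul_of_nonneg_right hCs (norm_nonneg _)
      have hlow : ‖v s‖ - ‖v (2 * s)‖ ≤ ‖v (2 * s) - v s‖ := by
        have := norm_sub_norm_le (v s) (v (2 * s))
        calc ‖v s‖ - ‖v (2 * s)‖ ≤ ‖v s - v (2 * s)‖ := this
          _ = ‖v (2 * s) - v s‖ := by rw [norm_sub_rev]
      have hstep : 3 / 4 * ‖v s‖ ≤ ‖v (2 * s)‖ := by linarith
      have heq : (2 : ℝ) ^ (n + 1) * r = 2 * s := by rw [hs]; ring
      calc (3 / 4 : ℝ) ^ (n + 1) * ‖v r‖ = 3 / 4 * ((3 / 4) ^ n * ‖v r‖) := by ring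
        _ ≤ 3 / 4 * ‖v s‖ := by nlinarith
        _ ≤ ‖v (2 * s)‖ := hstep
        _ = ‖v (2 ^ (n + 1) * r)‖ := by rw [heq]
  -- combine with decay
  have hub : ∀ n : ℕ, ‖v r‖ ≤ C / r ^ 2 * (1 / 3) ^ n := by
    intro n
    have h1 := claim n
    have h2 : ‖v (2 ^ n * r)‖ ≤ C / (2 ^ n * r) ^ 2 := by
      apply hdec
      have h2n : (1 : ℝ) ≤ 2 ^ n := one_le_pow₀ (by norm_num)
      have : r ≤ 2 ^ n * r := le_mul_of_one_le_left hr0.le h2n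
      linarith
    have e : C / (2 ^ n * r) ^ 2 = (3 / 4 : ℝ) ^ n * (C / r ^ 2 * (1 / 3) ^ n) := by
      rw [mul_pow, div_pow, div_pow]
      have h4 : ((2 : ℝ) ^ n) ^ 2 = 4 ^ n := by rw [← pow_mul, mul_comm, pow_mul]; norm_num
      field_simp [h4]
      ring_nf
      rw [mul_comm, pow_mul]; norm_num
    have key : (3 / 4 : ℝ) ^ n * ‖v r‖ ≤ (3 / 4) ^ n * (C / r ^ 2 * (1 / 3) ^ n) := by
      rw [← e]; exact le_trans h1 h2
    exact le_of_mul_le_mul_left key (by positivity)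
  have hlim : Filter.Tendsto (fun n : ℕ => C / r ^ 2 * (1 / 3 : ℝ) ^ n)
      Filter.atTop (nhds 0) := by
    have := tendsto_pow_atTop_nhds_zero_of_lt_one (by norm_num : (0:ℝ) ≤ 1/3)
      (by norm_num : (1/3 : ℝ) < 1)
    simpa using this.const_mul (C / r ^ 2)
  have hle : ‖v r‖ ≤ 0 := ge_of_tendsto' hlim hub
  have : ‖v r‖ = 0 := le_antisymm hle (norm_nonneg _)
  exact norm_eq_zero.mp this
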